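/- Let h be defined on a recursive datatype D by h(Con(d₁,...,d_k)) = f(|d|, hash(Con), h(d₁), ..., h(d_k)) where f is a uniformly random function into H = {0,1}^b and |d| is the number of constructor calls in d. Then for all distinct a, b ∈ D with |a|, |b| < 2^b, P(h(a) = h(b)) ≤ (|a| + |b|)/2^b. -/

import Mathlib

open MeasureTheory ProbabilityTheory
open scoped ENNReal

/-- A recursively defined datatype over a signature of constructor symbols `C`,
where constructor `c` has arity `ar c`. -/
inductive RTree (C : Type) (ar : C → ℕ) : Type
  | node : (c : C) → (Fin (ar c) → RTree C ar) → RTree C ar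

/-- The size of an element: the number of constructor calls. -/
def RTree.size {C : Type} {ar : C → ℕ} : RTree C ar → ℕ
  | .node c ch => 1 + ∑ i : Fin (ar c), (ch i).size

/-- The compositional hash: `h (Con (d₁, …, d_k)) = f (|d|, hash Con, [h d₁, …, h d_k])`,
where `hashC` hashes constructor symbols and `f` is the hash combiner. -/
def RTree.hashOf {C : Type} {ar : C → ℕ} {H : Type}
    (hashC : C → H) (f : ℕ → H → List H → H) : RTree C ar → H
  | .node c ch => f (RTree.size (.node c ch)) (hashC c)
      (List.ofFn fun i => (ch i).hashOf hashC f)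

namespace RRHCB
variable {C : Type} {ar : C → ℕ} {b : ℕ}

abbrev Hh (b : ℕ) := Fin b → Bool
abbrev Idx (C : Type) (b : ℕ) := C ⊕ (ℕ × Hh b × List (Hh b))

def hashG (g : Idx C b → Hh b) : RTree C ar → Hh b :=
  fun d => d.hashOf (fun c => g (.inl c)) (fun n x l => g (.inr (n, x, l)))

lemma hashG_node (g : Idx C b → Hh b) (c : C) (ch : Fin (ar c) → RTree C ar) :
    hashG g (.node c ch) =
      g (.inr ((RTree.node c ch).size, g (.inl c), List.ofFn fun i => hashG g (ch i))) := rfl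

open Classical in
noncomputable def RelS : RTree C ar → Finset (Idx C b)
  | .node c ch =>
      insert (Sum.inl c)
        (((Finset.univ : Finset (Hh b × (Fin (ar c) → Hh b))).image
            (fun xl => Sum.inr ((RTree.node c ch).size, xl.1, List.ofFn xl.2))) ∪
          Finset.univ.biUnion fun i => RelS (ch i))

lemma size_pos (d : RTree C ar) : 1 ≤ d.size := by
  cases d with | node c ch => simp [RTree.size]

lemma child_size_lt (c : C) (ch : Fin (ar c) → RTree C ar) (i : Fin (ar c)) :
    (ch i).size < (RTree.node c ch).size := by
  have : (ch i).size ≤ ∑ j : Fin (ar c), (ch j).size :=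
    Finset.single_le_sum (f := fun j => (ch j).size) (fun _ _ => Nat.zero_le _) (Finset.mem_univ i)
  simp only [RTree.size]; omega

end RRHCB
open MeasureTheory ProbabilityTheory Function
section
variable {C : Type} {ar : C → ℕ} {b : ℕ}
open RRHCB

open Classical in
lemma mem_Rel_inl (c : C) (ch : Fin (ar c) → RTree C ar) :
    (Sum.inl c : Idx C b) ∈ RelS (RTree.node c ch) := by
  simp [RelS]

open Classical in
lemma mem_Rel_inr (c : C) (ch : Fin (ar c) → RTree C ar) (x : Hh b) (l : Fin (ar c) → Hh b) :
    (Sum.inr ((RTree.node c ch).size, x, List.ofFn l) : Idx C b) ∈ RelS (RTree.node c ch) := by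
  simp only [RelS, Finset.mem_insert, Finset.mem_union, Finset.mem_image]
  exact Or.inr (Or.inl ⟨(x, l), Finset.mem_univ _, rfl⟩)

open Classical in
lemma Rel_child_subset (c : C) (ch : Fin (ar c) → RTree C ar) (i : Fin (ar c)) :
    (RelS (ch i) : Finset (Idx C b)) ⊆ RelS (RTree.node c ch) := by
  intro j hj
  simp only [RelS, Finset.mem_insert, Finset.mem_union, Finset.mem_biUnion]
  exact Or.inr (Or.inr ⟨i, Finset.mem_univ _, hj⟩)

lemma Rel_bound (d : RTree C ar) :
    ∀ j ∈ (RelS d : Finset (Idx C b)), (∃ c, j = Sum.inl c) ∨ ∃ p, j = Sum.inr p ∧ p.1 ≤ d.size := by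
  classical
  induction d with
  | node c ch ih =>
    intro j hj
    simp only [RelS, Finset.mem_insert, Finset.mem_union, Finset.mem_image,
      Finset.mem_biUnion] at hj
    rcases hj with rfl | ⟨⟨x, l⟩, -, rfl⟩ | ⟨i, -, hj⟩
    · exact Or.inl ⟨c, rfl⟩
    · exact Or.inr ⟨_, rfl, le_refl _⟩
    · rcases ih i j hj with h | ⟨p, rfl, hp⟩
      · exact Or.inl h
      · exact Or.inr ⟨p, rfl, hp.trans (child_size_lt c ch i).le⟩

lemma hashG_eq_of_agree (d : RTree C ar) (g g' : Idx C b → Hh b)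
    (h : ∀ j ∈ (RelS d : Finset (Idx C b)), g j = g' j) : hashG g d = hashG g' d := by
  classical
  induction d with
  | node c ch ih =>
    have hch : ∀ i, hashG g (ch i) = hashG g' (ch i) := fun i =>
      ih i fun j hj => h j (Rel_child_subset c ch i hj)
    have hc : g (Sum.inl c) = g' (Sum.inl c) := h _ (mem_Rel_inl c ch)
    rw [hashG_node, hashG_node, hc]
    have hl : (List.ofFn fun i => hashG g (ch i)) = List.ofFn fun i => hashG g' (ch i) := by
      congr 1; funext i; exact hch i
    rw [hl]
    exact h _ (by simpa using mem_Rel_inr c ch (g' (Sum.inl c)) (fun i => hashG g' (ch i)))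
end
section prob
open MeasureTheory ProbabilityTheory Function
open scoped ENNReal
variable {b : ℕ} {Ω : Type} [MeasurableSpace Ω] {μ : Measure Ω} [IsProbabilityMeasure μ]
  {I : Type} {X : I → Ω → RRHCB.Hh b}

open RRHCB

lemma card_Hh : (Fintype.card (Hh b)) = 2 ^ b := by
  simp [Hh]

lemma single_unif {i : I} (hu : μ.map (X i) = (PMF.uniformOfFintype (Hh b)).toMeasure)
    (v : Hh b) : μ (X i ⁻¹' {v}) = ((2 : ℝ≥0∞) ^ b)⁻¹ := by
  have ham : AEMeasurable (X i) μ := by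
    by_contra hn
    rw [Measure.map_of_not_aemeasurable hn] at hu
    have := congrArg (fun m => m Set.univ) hu
    simp [PMF.toMeasure_apply_eq_one_iff] at this
  have : μ (X i ⁻¹' {v}) = (μ.map (X i)) {v} := by
    rw [Measure.map_apply_of_aemeasurable ham (measurableSet_singleton v)]
  rw [this, hu, PMF.toMeasure_apply_singleton _ _ (measurableSet_singleton v),
    PMF.uniformOfFintype_apply]
  norm_cast
  rw [card_Hh]

lemma core_indep (hi : iIndepFun X μ)
    (hu : ∀ i, μ.map (X i) = (PMF.uniformOfFintype (Hh b)).toMeasure)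
    (s : Finset I) (w : I → Hh b) :
    μ (⋂ i ∈ s, X i ⁻¹' {w i}) = ((2 : ℝ≥0∞) ^ b)⁻¹ ^ s.card := by
  rw [hi.measure_inter_preimage_eq_mul s (sets := fun i => {w i})
    (fun i _ => measurableSet_singleton _)]
  rw [Finset.prod_congr rfl (fun i _ => single_unif (hu i) (w i)), Finset.prod_const]

end prob
section slicing
open MeasureTheory ProbabilityTheory Function
open scoped ENNReal
open RRHCB
variable {b : ℕ} {Ω : Type} [MeasurableSpace Ω] {μ : Measure Ω} [IsProbabilityMeasure μ]
  {I : Type} {X : I → Ω → Hh b}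

lemma arith_pow (k : ℕ) :
    ((2 : ℝ≥0∞) ^ b) ^ k * ((2 : ℝ≥0∞) ^ b)⁻¹ ^ (k + 1) = ((2 : ℝ≥0∞) ^ b)⁻¹ := by
  have h0 : ((2 : ℝ≥0∞) ^ b) ≠ 0 := pow_ne_zero _ two_ne_zero
  have ht : ((2 : ℝ≥0∞) ^ b) ≠ ⊤ := ENNReal.pow_ne_top ENNReal.ofNat_ne_top
  rw [pow_succ, ← mul_assoc, ← mul_pow, ENNReal.mul_inv_cancel h0 ht, one_pow, one_mul]

lemma arith_pow2 (k : ℕ) :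
    (2 : ℝ≥0∞) ^ b * ((2 : ℝ≥0∞) ^ b)⁻¹ ^ (k + 2) = ((2 : ℝ≥0∞) ^ b)⁻¹ ^ (k + 1) := by
  have h0 : ((2 : ℝ≥0∞) ^ b) ≠ 0 := pow_ne_zero _ two_ne_zero
  have ht : ((2 : ℝ≥0∞) ^ b) ≠ ⊤ := ENNReal.pow_ne_top ENNReal.ofNat_ne_top
  calc (2 : ℝ≥0∞) ^ b * ((2 : ℝ≥0∞) ^ b)⁻¹ ^ (k + 2)
      = ((2:ℝ≥0∞)^b * ((2:ℝ≥0∞)^b)⁻¹) * ((2 : ℝ≥0∞) ^ b)⁻¹ ^ (k+1) := by ring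
    _ = ((2 : ℝ≥0∞) ^ b)⁻¹ ^ (k + 1) := by
        rw [ENNReal.mul_inv_cancel h0 ht, one_mul]

/-- Freshness lemma: the probability that a "fresh" coordinate (chosen depending only on
coordinates indexed by `ι`, and outside the range of `ι`) equals a value determined by the
`ι`-coordinates is at most `2⁻ᵇ`. -/
lemma fresh_coord (hi : iIndepFun X μ)
    (hu : ∀ i, μ.map (X i) = (PMF.uniformOfFintype (Hh b)).toMeasure)
    {V : Type} [Fintype V] (ι : V → I) (hι : Function.Injective ι)
    (p : (V → Hh b) → I) (T : (V → Hh b) → Hh b)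
    (hp : ∀ v, p v ∉ Set.range ι) :
    μ {ω | X (p (fun j => X (ι j) ω)) ω = T (fun j => X (ι j) ω)} ≤ ((2:ℝ≥0∞) ^ b)⁻¹ := by
  classical
  set E := {ω | X (p (fun j => X (ι j) ω)) ω = T (fun j => X (ι j) ω)} with hE
  set A : (V → Hh b) → Set Ω := fun v => ⋂ j, X (ι j) ⁻¹' {v j} with hA
  have cover : E ⊆ ⋃ v : V → Hh b, E ∩ A v := by
    intro ω hω
    exact Set.mem_iUnion.2 ⟨fun j => X (ι j) ω, hω, by simp [hA]⟩
  have key : ∀ v : V → Hh b, μ (E ∩ A v) ≤ ((2:ℝ≥0∞)^b)⁻¹ ^ (Fintype.card V + 1) := by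
    intro v
    set w : I → Hh b := fun i => if i = p v then T v else Function.extend ι v (fun _ => default) i
      with hw
    have hsub : E ∩ A v ⊆ ⋂ i ∈ insert (p v) (Finset.image ι Finset.univ), X i ⁻¹' {w i} := by
      intro ω ⟨hωE, hωA⟩
      have hrestr : (fun j => X (ι j) ω) = v := by
        funext j
        have := Set.mem_iInter.1 hωA j
        simpa using this
      simp only [Set.mem_iInter₂, Finset.mem_insert, Finset.mem_image]
      rintro i (rfl | hi')
      · simp only [Set.mem_preimage, Set.mem_singleton_iff, hw, if_pos rfl]
        rw [hE] at hωE
        simpa [hrestr] using hωE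
      · simp only [Finset.mem_image, Finset.mem_univ, true_and] at hi'
        obtain ⟨j, -, rfl⟩ := hi'
        have hne : ι j ≠ p v := fun hc => hp v ⟨j, hc⟩
        simp only [Set.mem_preimage, Set.mem_singleton_iff, hw, if_neg hne,
          hι.extend_apply]
        exact congrFun hrestr j
    calc μ (E ∩ A v) ≤ μ (⋂ i ∈ insert (p v) (Finset.image ι Finset.univ), X i ⁻¹' {w i}) :=
          measure_mono hsub
      _ = ((2:ℝ≥0∞)^b)⁻¹ ^ (insert (p v) (Finset.image ι Finset.univ)).card :=
          core_indep hi hu _ w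
      _ = ((2:ℝ≥0∞)^b)⁻¹ ^ (Fintype.card V + 1) := by
          rw [Finset.card_insert_of_notMem (by
            simp only [Finset.mem_image, Finset.mem_univ, true_and]
            rintro ⟨j, hj⟩; exact hp v ⟨j, hj⟩),
            Finset.card_image_of_injective _ hι, Finset.card_univ]
  calc μ E ≤ μ (⋃ v : V → Hh b, E ∩ A v) := measure_mono cover
    _ ≤ ∑' v : V → Hh b, μ (E ∩ A v) := measure_iUnion_le _
    _ = ∑ v : V → Hh b, μ (E ∩ A v) := tsum_fintype _
    _ ≤ ∑ v : V → Hh b, ((2:ℝ≥0∞)^b)⁻¹ ^ (Fintype.card V + 1) :=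
        Finset.sum_le_sum fun v _ => key v
    _ = (Fintype.card (V → Hh b) : ℝ≥0∞) * ((2:ℝ≥0∞)^b)⁻¹ ^ (Fintype.card V + 1) := by
        rw [Finset.sum_const, Finset.card_univ, nsmul_eq_mul]
    _ = ((2:ℝ≥0∞)^b) ^ (Fintype.card V) * ((2:ℝ≥0∞)^b)⁻¹ ^ (Fintype.card V + 1) := by
        congr 1
        rw [Fintype.card_fun, card_Hh]
        push_cast
        ring
    _ = ((2:ℝ≥0∞)^b)⁻¹ := arith_pow _

/-- Pair-collision lemma with a guard: the probability that two distinct coordinates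
(chosen depending only on the `ι`-coordinates, outside the range of `ι`, whenever a guard
predicate of the `ι`-coordinates holds) have equal values is at most `2⁻ᵇ`. -/
lemma pair_coord (hi : iIndepFun X μ)
    (hu : ∀ i, μ.map (X i) = (PMF.uniformOfFintype (Hh b)).toMeasure)
    {V : Type} [Fintype V] (ι : V → I) (hι : Function.Injective ι)
    (S : (V → Hh b) → Prop) (p q : (V → Hh b) → I)
    (hp : ∀ v, S v → p v ∉ Set.range ι) (hq : ∀ v, S v → q v ∉ Set.range ι)
    (hpq : ∀ v, S v → p v ≠ q v) :
    μ {ω | S (fun j => X (ι j) ω) ∧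
        X (p (fun j => X (ι j) ω)) ω = X (q (fun j => X (ι j) ω)) ω} ≤ ((2:ℝ≥0∞) ^ b)⁻¹ := by
  classical
  set E := {ω | S (fun j => X (ι j) ω) ∧
      X (p (fun j => X (ι j) ω)) ω = X (q (fun j => X (ι j) ω)) ω} with hE
  set A : (V → Hh b) → Set Ω := fun v => ⋂ j, X (ι j) ⁻¹' {v j} with hA
  have cover : E ⊆ ⋃ v : V → Hh b, E ∩ A v := by
    intro ω hω
    exact Set.mem_iUnion.2 ⟨fun j => X (ι j) ω, hω, by simp [hA]⟩
  have key : ∀ v : V → Hh b, μ (E ∩ A v) ≤ ((2:ℝ≥0∞)^b)⁻¹ ^ (Fintype.card V + 1) := by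
    intro v
    by_cases hSv : S v
    · -- slice further over the common value h
      have hsub : E ∩ A v ⊆ ⋃ h : Hh b,
          ⋂ i ∈ insert (p v) (insert (q v) (Finset.image ι Finset.univ)),
            X i ⁻¹' {Function.update (Function.update
              (Function.extend ι v (fun _ => default)) (p v) h) (q v) h i} := by
        intro ω ⟨hωE, hωA⟩
        have hrestr : (fun j => X (ι j) ω) = v := by
          funext j
          have := Set.mem_iInter.1 hωA j
          simpa using this
        rw [hE] at hωE
        obtain ⟨hS, hcol⟩ := hωE
        rw [hrestr] at hS hcol
        refine Set.mem_iUnion.2 ⟨X (p v) ω, ?_⟩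
        simp only [Set.mem_iInter₂, Finset.mem_insert, Finset.mem_image]
        rintro i (rfl | rfl | hi')
        · simp [Function.update_of_ne (hpq v hSv), Function.update_self]
        · simp [Function.update_self, hcol]
        · simp only [Finset.mem_image, Finset.mem_univ, true_and] at hi'
          obtain ⟨j, -, rfl⟩ := hi'
          have hne1 : ι j ≠ p v := fun hc => hp v hSv ⟨j, hc⟩
          have hne2 : ι j ≠ q v := fun hc => hq v hSv ⟨j, hc⟩
          simp only [Set.mem_preimage, Set.mem_singleton_iff,
            Function.update_of_ne hne2, Function.update_of_ne hne1, hι.extend_apply]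
          exact congrFun hrestr j
      have hcard : (insert (p v) (insert (q v) (Finset.image ι Finset.univ))).card
          = Fintype.card V + 2 := by
        rw [Finset.card_insert_of_notMem, Finset.card_insert_of_notMem,
          Finset.card_image_of_injective _ hι, Finset.card_univ]
        · simp only [Finset.mem_image, Finset.mem_univ, true_and]
          rintro ⟨j, hj⟩; exact hq v hSv ⟨j, hj⟩
        · simp only [Finset.mem_insert, Finset.mem_image, Finset.mem_univ, true_and]
          rintro (hc | ⟨j, hj⟩)
          · exact hpq v hSv hc
          · exact hp v hSv ⟨j, hj⟩
      calc μ (E ∩ A v) ≤ ∑' h : Hh b, μ (⋂ i ∈ insert (p v) (insert (q v)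
              (Finset.image ι Finset.univ)), X i ⁻¹' {Function.update (Function.update
              (Function.extend ι v (fun _ => default)) (p v) h) (q v) h i}) :=
            (measure_mono hsub).trans (measure_iUnion_le _)
        _ = ∑ h : Hh b, ((2:ℝ≥0∞)^b)⁻¹ ^ (Fintype.card V + 2) := by
            rw [tsum_fintype]
            exact Finset.sum_congr rfl fun h _ => by rw [core_indep hi hu _ _, hcard]
        _ = (2:ℝ≥0∞)^b * ((2:ℝ≥0∞)^b)⁻¹ ^ (Fintype.card V + 2) := by
            rw [Finset.sum_const, Finset.card_univ, card_Hh, nsmul_eq_mul]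
            push_cast; ring
        _ = ((2:ℝ≥0∞)^b)⁻¹ ^ (Fintype.card V + 1) := arith_pow2 _
    · have : E ∩ A v = ∅ := by
        ext ω
        simp only [Set.mem_inter_iff, Set.mem_empty_iff_false, iff_false, not_and]
        intro hωE hωA
        have hrestr : (fun j => X (ι j) ω) = v := by
          funext j
          have := Set.mem_iInter.1 hωA j
          simpa using this
        rw [hE] at hωE
        exact hSv (hrestr ▸ hωE.1)
      simp [this]
  calc μ E ≤ μ (⋃ v : V → Hh b, E ∩ A v) := measure_mono cover
    _ ≤ ∑' v : V → Hh b, μ (E ∩ A v) := measure_iUnion_le _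
    _ = ∑ v : V → Hh b, μ (E ∩ A v) := tsum_fintype _
    _ ≤ ∑ v : V → Hh b, ((2:ℝ≥0∞)^b)⁻¹ ^ (Fintype.card V + 1) :=
        Finset.sum_le_sum fun v _ => key v
    _ = (Fintype.card (V → Hh b) : ℝ≥0∞) * ((2:ℝ≥0∞)^b)⁻¹ ^ (Fintype.card V + 1) := by
        rw [Finset.sum_const, Finset.card_univ, nsmul_eq_mul]
    _ = ((2:ℝ≥0∞)^b) ^ (Fintype.card V) * ((2:ℝ≥0∞)^b)⁻¹ ^ (Fintype.card V + 1) := by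
        congr 1
        rw [Fintype.card_fun, card_Hh]
        push_cast
        ring
    _ = ((2:ℝ≥0∞)^b)⁻¹ := arith_pow _

end slicing
section main
open MeasureTheory ProbabilityTheory Function
open scoped ENNReal
open RRHCB
variable {C : Type} {ar : C → ℕ} {b : ℕ}

/-- The argument pair fed to the top-level combiner call. -/
def argsOf (g : Idx C b → Hh b) (c : C) (ch : Fin (ar c) → RTree C ar) :
    Hh b × List (Hh b) :=
  (g (.inl c), List.ofFn fun i => hashG g (ch i))

lemma hashG_node'' (g : Idx C b → Hh b) (c : C) (ch : Fin (ar c) → RTree C ar) :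
    hashG g (.node c ch) = g (.inr ((RTree.node c ch).size, argsOf g c ch)) := rfl

open Classical in
noncomputable def Jlow (c : C) (ch : Fin (ar c) → RTree C ar) : Finset (Idx C b) :=
  insert (Sum.inl c) (Finset.univ.biUnion fun i => RelS (ch i))

open Classical in
lemma argsOf_eq_of_agree (c : C) (ch : Fin (ar c) → RTree C ar)
    (g g' : Idx C b → Hh b) (h : ∀ j ∈ (Jlow c ch : Finset (Idx C b)), g j = g' j) :
    argsOf g c ch = argsOf g' c ch := by
  unfold argsOf
  have h1 : g (Sum.inl c) = g' (Sum.inl c) := h _ (Finset.mem_insert_self _ _)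
  have h2 : ∀ i, hashG g (ch i) = hashG g' (ch i) := fun i =>
    hashG_eq_of_agree (ch i) g g' fun j hj =>
      h j (Finset.mem_insert_of_mem (Finset.mem_biUnion.2 ⟨i, Finset.mem_univ _, hj⟩))
  rw [h1]
  congr 1
  exact congrArg List.ofFn (funext h2)

open Classical in
lemma Jlow_bound (c : C) (ch : Fin (ar c) → RTree C ar) :
    ∀ j ∈ (Jlow c ch : Finset (Idx C b)),
      (∃ c', j = Sum.inl c') ∨ ∃ p, j = Sum.inr p ∧ p.1 < (RTree.node c ch).size := by
  intro j hj
  rcases Finset.mem_insert.1 hj with rfl | hj'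
  · exact Or.inl ⟨c, rfl⟩
  · obtain ⟨i, -, hji⟩ := Finset.mem_biUnion.1 hj'
    rcases Rel_bound (ch i) j hji with h | ⟨p, rfl, hp⟩
    · exact Or.inl h
    · exact Or.inr ⟨p, rfl, lt_of_le_of_lt hp (child_size_lt c ch i)⟩

variable {Ω : Type} [MeasurableSpace Ω] {μ : Measure Ω} [IsProbabilityMeasure μ]
  {X : Idx C b → Ω → Hh b}

/-- Extend a partial assignment on a finite coordinate set to a full assignment. -/
noncomputable def extJ (J : Finset (Idx C b)) (v : ↥J → Hh b) : Idx C b → Hh b :=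
  Function.extend Subtype.val v (fun _ => default)

lemma extJ_agree (J : Finset (Idx C b)) (ω : Ω) {j : Idx C b} (hj : j ∈ J) :
    extJ J (fun j : ↥J => X (↑j) ω) j = X j ω := by
  have h : j = ((⟨j, hj⟩ : ↥J) : Idx C b) := rfl
  rw [h, extJ, Subtype.coe_injective.extend_apply]

/-- Case `|t| < |a|`: the top-level combiner call of `a` is fresh. -/
lemma case_gt (hi : iIndepFun X μ)
    (hu : ∀ i, μ.map (X i) = (PMF.uniformOfFintype (Hh b)).toMeasure)
    (a t : RTree C ar) (hgt : t.size < a.size) :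
    μ {ω | hashG (fun i => X i ω) a = hashG (fun i => X i ω) t} ≤ ((2:ℝ≥0∞) ^ b)⁻¹ := by
  classical
  obtain ⟨ca, cha⟩ := a
  set J : Finset (Idx C b) := Jlow ca cha ∪ RelS t with hJ
  refine le_trans (measure_mono ?_) (fresh_coord hi hu (Subtype.val : ↥J → Idx C b)
    Subtype.coe_injective
    (fun v => Sum.inr ((RTree.node ca cha).size, argsOf (extJ J v) ca cha))
    (fun v => hashG (extJ J v) t) ?_)
  · intro ω hω
    simp only [Set.mem_setOf_eq] at hω ⊢
    have hagree : ∀ j ∈ J, extJ J (fun j : ↥J => X (↑j) ω) j = X j ω :=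
      fun j hj => extJ_agree J ω hj
    have h1 : argsOf (extJ J (fun j : ↥J => X (↑j) ω)) ca cha
        = argsOf (fun i => X i ω) ca cha :=
      argsOf_eq_of_agree ca cha _ _ fun j hj => hagree j (Finset.mem_union_left _ hj)
    have h2 : hashG (extJ J (fun j : ↥J => X (↑j) ω)) t = hashG (fun i => X i ω) t :=
      hashG_eq_of_agree t _ _ fun j hj => hagree j (Finset.mem_union_right _ hj)
    rw [h1, h2]
    exact hω
  · intro v hv
    rw [Subtype.range_coe] at hv
    have hv' : (Sum.inr ((RTree.node ca cha).size, argsOf (extJ J v) ca cha) : Idx C b) ∈ J := hv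
    rcases Finset.mem_union.1 hv' with hl | hr
    · rcases Jlow_bound ca cha _ hl with ⟨c', hc'⟩ | ⟨p, hp, hps⟩
      · exact absurd hc' (by simp)
      · have hpe : p.1 = (RTree.node ca cha).size := by
          have h' := Sum.inr_injective hp.symm
          rw [h']
        omega
    · rcases Rel_bound t _ hr with ⟨c', hc'⟩ | ⟨p, hp, hps⟩
      · exact absurd hc' (by simp)
      · have hpe : p.1 = (RTree.node ca cha).size := by
          have h' := Sum.inr_injective hp.symm
          rw [h']
        omega
end main
section mainind
open MeasureTheory ProbabilityTheory Function
open scoped ENNReal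
open RRHCB
variable {C : Type} {ar : C → ℕ} {b : ℕ} {Ω : Type} [MeasurableSpace Ω] {μ : Measure Ω}
  [IsProbabilityMeasure μ] {X : Idx C b → Ω → Hh b}

lemma one_le_sizes (a t : RTree C ar) : (1 : ℝ≥0∞) ≤ (a.size : ℝ≥0∞) + (t.size : ℝ≥0∞) := by
  have h1 : 1 ≤ a.size := size_pos a
  have : (1 : ℝ≥0∞) ≤ (a.size : ℝ≥0∞) := by exact_mod_cast h1
  exact this.trans (le_self_add)

lemma main_ind (hi : iIndepFun X μ)
    (hu : ∀ i, μ.map (X i) = (PMF.uniformOfFintype (Hh b)).toMeasure) :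
    ∀ n, ∀ a t : RTree C ar, a.size + t.size ≤ n → a ≠ t →
      μ {ω | hashG (fun i => X i ω) a = hashG (fun i => X i ω) t}
        ≤ ((a.size : ℝ≥0∞) + (t.size : ℝ≥0∞)) * ((2:ℝ≥0∞) ^ b)⁻¹ := by
  classical
  intro n
  induction n with
  | zero =>
    intro a t hsz _
    have := size_pos a
    omega
  | succ n ih =>
    intro a t hsz hne
    rcases lt_trichotomy a.size t.size with hlt | heq | hgt
    · have hb := case_gt hi hu t a hlt
      have hset : {ω | hashG (fun i => X i ω) a = hashG (fun i => X i ω) t}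
          = {ω | hashG (fun i => X i ω) t = hashG (fun i => X i ω) a} := by
        ext ω; exact eq_comm
      rw [hset]
      calc μ _ ≤ ((2:ℝ≥0∞) ^ b)⁻¹ := hb
        _ = 1 * ((2:ℝ≥0∞) ^ b)⁻¹ := (one_mul _).symm
        _ ≤ ((a.size : ℝ≥0∞) + (t.size : ℝ≥0∞)) * ((2:ℝ≥0∞) ^ b)⁻¹ :=
            mul_le_mul_left (one_le_sizes a t) _
    · -- equal sizes
      obtain ⟨ca, cha⟩ := a
      obtain ⟨ct, cht⟩ := t
      set g : Ω → Idx C b → Hh b := fun ω i => X i ω with hg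
      by_cases hc : ca = ct
      · -- same constructor
        subst hc
        have hch : cha ≠ cht := by
          intro h; exact hne (by rw [h])
        have hex : ∃ i, cha i ≠ cht i := by
          by_contra h
          push_neg at h
          exact hch (funext h)
        obtain ⟨i0, hi0⟩ := hex
        set J : Finset (Idx C b) := Jlow ca cha ∪ Jlow ca cht with hJ
        set S : (↥J → Hh b) → Prop := fun v =>
          argsOf (extJ J v) ca cha ≠ argsOf (extJ J v) ca cht with hS
        set p : (↥J → Hh b) → Idx C b := fun v =>
          Sum.inr ((RTree.node ca cha).size, argsOf (extJ J v) ca cha) with hp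
        set q : (↥J → Hh b) → Idx C b := fun v =>
          Sum.inr ((RTree.node ca cht).size, argsOf (extJ J v) ca cht) with hq
        have hnotmem : ∀ (v : ↥J → Hh b) (m : ℕ) (ag : Hh b × List (Hh b)),
            m = (RTree.node ca cha).size → (Sum.inr (m, ag) : Idx C b) ∉ Set.range
              (Subtype.val : ↥J → Idx C b) := by
          intro v m ag hm hmem
          rw [Subtype.range_coe] at hmem
          have hmem' : (Sum.inr (m, ag) : Idx C b) ∈ J := hmem
          rcases Finset.mem_union.1 hmem' with hl | hr
          · rcases Jlow_bound ca cha _ hl with ⟨c', hc'⟩ | ⟨pp, hpp, hps⟩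
            · exact absurd hc' (by simp)
            · have h' := Sum.inr_injective hpp.symm
              rw [h'] at hps
              simp at hps; omega
          · rcases Jlow_bound ca cht _ hr with ⟨c', hc'⟩ | ⟨pp, hpp, hps⟩
            · exact absurd hc' (by simp)
            · have h' := Sum.inr_injective hpp.symm
              rw [h'] at hps
              simp only at hps
              -- p.1 = m < size (node ca cht) but m = size (node ca cha) = size (node ca cht)?
              omega
          -- note: heq : (node ca cha).size = (node ca cht).size
        have heq' : (RTree.node ca cha).size = (RTree.node ca cht).size := heq
        have hp' : ∀ v, S v → p v ∉ Set.range (Subtype.val : ↥J → Idx C b) :=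
          fun v _ => hnotmem v _ _ rfl
        have hq' : ∀ v, S v → q v ∉ Set.range (Subtype.val : ↥J → Idx C b) :=
          fun v _ => hnotmem v _ _ heq'.symm
        have hpq' : ∀ v, S v → p v ≠ q v := by
          intro v hSv h
          have h' := Sum.inr_injective h
          apply hSv
          have := congrArg Prod.snd h'
          simpa using this
        have hE2 := pair_coord hi hu (Subtype.val : ↥J → Idx C b) Subtype.coe_injective
          S p q hp' hq' hpq'
        have hchild := ih (cha i0) (cht i0) (by
          have h1 := child_size_lt ca cha i0
          have h2 := child_size_lt ca cht i0
          omega) hi0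
        have hsub : {ω | hashG (g ω) (RTree.node ca cha) = hashG (g ω) (RTree.node ca cht)}
            ⊆ {ω | hashG (g ω) (cha i0) = hashG (g ω) (cht i0)} ∪
              {ω | S (fun j : ↥J => X (↑j) ω) ∧
                X (p (fun j : ↥J => X (↑j) ω)) ω = X (q (fun j : ↥J => X (↑j) ω)) ω} := by
          intro ω hω
          simp only [Set.mem_setOf_eq] at hω
          have hagree : ∀ j ∈ J, extJ J (fun j : ↥J => X (↑j) ω) j = X j ω :=
            fun j hj => extJ_agree J ω hj
          have h1 : argsOf (extJ J (fun j : ↥J => X (↑j) ω)) ca cha = argsOf (g ω) ca cha :=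
            argsOf_eq_of_agree ca cha _ _ fun j hj => hagree j (Finset.mem_union_left _ hj)
          have h2 : argsOf (extJ J (fun j : ↥J => X (↑j) ω)) ca cht = argsOf (g ω) ca cht :=
            argsOf_eq_of_agree ca cht _ _ fun j hj => hagree j (Finset.mem_union_right _ hj)
          by_cases hargs : argsOf (g ω) ca cha = argsOf (g ω) ca cht
          · left
            have hlists := congrArg Prod.snd hargs
            simp only [argsOf] at hlists
            have := List.ofFn_injective hlists
            exact congrFun this i0
          · right
            refine ⟨by simp only [hS, h1, h2]; exact hargs, ?_⟩
            have hXA : X (p (fun j : ↥J => X (↑j) ω)) ω = hashG (g ω) (RTree.node ca cha) := by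
              simp only [hp, h1]; rfl
            have hXT : X (q (fun j : ↥J => X (↑j) ω)) ω = hashG (g ω) (RTree.node ca cht) := by
              simp only [hq, h2]; rfl
            rw [hXA, hXT]; exact hω
        calc μ {ω | hashG (g ω) (RTree.node ca cha) = hashG (g ω) (RTree.node ca cht)}
            ≤ μ ({ω | hashG (g ω) (cha i0) = hashG (g ω) (cht i0)} ∪
              {ω | S (fun j : ↥J => X (↑j) ω) ∧
                X (p (fun j : ↥J => X (↑j) ω)) ω = X (q (fun j : ↥J => X (↑j) ω)) ω}) :=
              measure_mono hsub
          _ ≤ μ {ω | hashG (g ω) (cha i0) = hashG (g ω) (cht i0)} +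
              μ {ω | S (fun j : ↥J => X (↑j) ω) ∧
                X (p (fun j : ↥J => X (↑j) ω)) ω = X (q (fun j : ↥J => X (↑j) ω)) ω} :=
              measure_union_le _ _
          _ ≤ (((cha i0).size : ℝ≥0∞) + ((cht i0).size : ℝ≥0∞)) * ((2:ℝ≥0∞) ^ b)⁻¹ +
              1 * ((2:ℝ≥0∞) ^ b)⁻¹ := by
              rw [one_mul]; exact add_le_add hchild hE2
          _ = (((cha i0).size : ℝ≥0∞) + ((cht i0).size : ℝ≥0∞) + 1) * ((2:ℝ≥0∞) ^ b)⁻¹ := by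
              ring
          _ ≤ (((RTree.node ca cha).size : ℝ≥0∞) + ((RTree.node ca cht).size : ℝ≥0∞)) *
              ((2:ℝ≥0∞) ^ b)⁻¹ := by
              refine mul_le_mul_left ?_ _
              have h1 := child_size_lt ca cha i0
              have h2 := child_size_lt ca cht i0
              have : (cha i0).size + (cht i0).size + 1
                  ≤ (RTree.node ca cha).size + (RTree.node ca cht).size := by omega
              exact_mod_cast this
      · -- different constructors
        set J : Finset (Idx C b) := Jlow ca cha ∪ Jlow ct cht with hJ
        set S : (↥J → Hh b) → Prop := fun v =>
          argsOf (extJ J v) ca cha ≠ argsOf (extJ J v) ct cht with hS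
        set p : (↥J → Hh b) → Idx C b := fun v =>
          Sum.inr ((RTree.node ca cha).size, argsOf (extJ J v) ca cha) with hp
        set q : (↥J → Hh b) → Idx C b := fun v =>
          Sum.inr ((RTree.node ct cht).size, argsOf (extJ J v) ct cht) with hq
        have heq' : (RTree.node ca cha).size = (RTree.node ct cht).size := heq
        have hnotmem : ∀ (m : ℕ) (ag : Hh b × List (Hh b)),
            m = (RTree.node ca cha).size → (Sum.inr (m, ag) : Idx C b) ∉ Set.range
              (Subtype.val : ↥J → Idx C b) := by
          intro m ag hm hmem
          rw [Subtype.range_coe] at hmem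
          have hmem' : (Sum.inr (m, ag) : Idx C b) ∈ J := hmem
          rcases Finset.mem_union.1 hmem' with hl | hr
          · rcases Jlow_bound ca cha _ hl with ⟨c', hc'⟩ | ⟨pp, hpp, hps⟩
            · exact absurd hc' (by simp)
            · have h' := Sum.inr_injective hpp.symm
              rw [h'] at hps
              simp only at hps; omega
          · rcases Jlow_bound ct cht _ hr with ⟨c', hc'⟩ | ⟨pp, hpp, hps⟩
            · exact absurd hc' (by simp)
            · have h' := Sum.inr_injective hpp.symm
              rw [h'] at hps
              simp only at hps; omega
        have hp' : ∀ v, S v → p v ∉ Set.range (Subtype.val : ↥J → Idx C b) :=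
          fun v _ => hnotmem _ _ rfl
        have hq' : ∀ v, S v → q v ∉ Set.range (Subtype.val : ↥J → Idx C b) :=
          fun v _ => hnotmem _ _ heq'.symm
        have hpq' : ∀ v, S v → p v ≠ q v := by
          intro v hSv h
          have h' := Sum.inr_injective h
          apply hSv
          have := congrArg Prod.snd h'
          simpa using this
        have hE2 := pair_coord hi hu (Subtype.val : ↥J → Idx C b) Subtype.coe_injective
          S p q hp' hq' hpq'
        have hE1 := pair_coord (μ := μ) hi hu
          (Subtype.val : ↥(∅: Finset (Idx C b)) → Idx C b) Subtype.coe_injective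
          (fun _ => True) (fun _ => Sum.inl ca) (fun _ => Sum.inl ct)
          (by intro v _ hmem; rw [Subtype.range_coe] at hmem; exact Finset.notMem_empty _ hmem)
          (by intro v _ hmem; rw [Subtype.range_coe] at hmem; exact Finset.notMem_empty _ hmem)
          (by intro v _ h; exact hc (Sum.inl_injective h))
        have hsub : {ω | hashG (g ω) (RTree.node ca cha) = hashG (g ω) (RTree.node ct cht)}
            ⊆ {ω | True ∧ X (Sum.inl ca) ω = X (Sum.inl ct) ω} ∪
              {ω | S (fun j : ↥J => X (↑j) ω) ∧
                X (p (fun j : ↥J => X (↑j) ω)) ω = X (q (fun j : ↥J => X (↑j) ω)) ω} := by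
          intro ω hω
          simp only [Set.mem_setOf_eq] at hω
          have hagree : ∀ j ∈ J, extJ J (fun j : ↥J => X (↑j) ω) j = X j ω :=
            fun j hj => extJ_agree J ω hj
          have h1 : argsOf (extJ J (fun j : ↥J => X (↑j) ω)) ca cha = argsOf (g ω) ca cha :=
            argsOf_eq_of_agree ca cha _ _ fun j hj => hagree j (Finset.mem_union_left _ hj)
          have h2 : argsOf (extJ J (fun j : ↥J => X (↑j) ω)) ct cht = argsOf (g ω) ct cht :=
            argsOf_eq_of_agree ct cht _ _ fun j hj => hagree j (Finset.mem_union_right _ hj)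
          by_cases hargs : argsOf (g ω) ca cha = argsOf (g ω) ct cht
          · left
            have hfst := congrArg Prod.fst hargs
            simp only [argsOf] at hfst
            exact ⟨trivial, hfst⟩
          · right
            refine ⟨by simp only [hS, h1, h2]; exact hargs, ?_⟩
            have hXA : X (p (fun j : ↥J => X (↑j) ω)) ω = hashG (g ω) (RTree.node ca cha) := by
              simp only [hp, h1]; rfl
            have hXT : X (q (fun j : ↥J => X (↑j) ω)) ω = hashG (g ω) (RTree.node ct cht) := by
              simp only [hq, h2]; rfl
            rw [hXA, hXT]; exact hω
        calc μ {ω | hashG (g ω) (RTree.node ca cha) = hashG (g ω) (RTree.node ct cht)}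
            ≤ μ ({ω | True ∧ X (Sum.inl ca) ω = X (Sum.inl ct) ω} ∪
              {ω | S (fun j : ↥J => X (↑j) ω) ∧
                X (p (fun j : ↥J => X (↑j) ω)) ω = X (q (fun j : ↥J => X (↑j) ω)) ω}) :=
              measure_mono hsub
          _ ≤ μ {ω | True ∧ X (Sum.inl ca) ω = X (Sum.inl ct) ω} +
              μ {ω | S (fun j : ↥J => X (↑j) ω) ∧
                X (p (fun j : ↥J => X (↑j) ω)) ω = X (q (fun j : ↥J => X (↑j) ω)) ω} :=
              measure_union_le _ _
          _ ≤ ((2:ℝ≥0∞) ^ b)⁻¹ + ((2:ℝ≥0∞) ^ b)⁻¹ := add_le_add hE1 hE2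
          _ = 2 * ((2:ℝ≥0∞) ^ b)⁻¹ := (two_mul _).symm
          _ ≤ (((RTree.node ca cha).size : ℝ≥0∞) + ((RTree.node ct cht).size : ℝ≥0∞)) *
              ((2:ℝ≥0∞) ^ b)⁻¹ := by
              refine mul_le_mul_left ?_ _
              have h1 := size_pos (RTree.node ca cha)
              have h2 := size_pos (RTree.node ct cht)
              have : (2:ℕ) ≤ (RTree.node ca cha).size + (RTree.node ct cht).size := by omega
              exact_mod_cast this
    · have hb := case_gt hi hu a t hgt
      calc μ _ ≤ ((2:ℝ≥0∞) ^ b)⁻¹ := hb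
        _ = 1 * ((2:ℝ≥0∞) ^ b)⁻¹ := (one_mul _).symm
        _ ≤ ((a.size : ℝ≥0∞) + (t.size : ℝ≥0∞)) * ((2:ℝ≥0∞) ^ b)⁻¹ :=
            mul_le_mul_left (one_le_sizes a t) _
end mainind

/-- If the constructor hashes and the combiner `f` are a jointly independent family of
uniformly random values in `H = {0,1}^b` (one independent uniform value per constructor
symbol and per argument tuple of `f`), then for any distinct `a b : D` with sizes below
`2^b`, the probability of a hash collision is at most `(|a| + |b|) / 2^b`. -/
theorem random_recursive_hash_collision_bound
    {C : Type} [MeasurableSpace C] (ar : C → ℕ) (b : ℕ)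
    {Ω : Type} [MeasurableSpace Ω] (μ : Measure Ω) [IsProbabilityMeasure μ]
    (hashC : Ω → C → (Fin b → Bool)) (f : Ω → ℕ → (Fin b → Bool) → List (Fin b → Bool) → (Fin b → Bool))
    -- the family of all hash values used (indexed by constructor symbols on the left and
    -- by argument tuples of `f` on the right) is jointly independent …
    (hIndep : iIndepFun
      (fun (i : C ⊕ (ℕ × (Fin b → Bool) × List (Fin b → Bool))) (ω : Ω) =>
        Sum.elim (hashC ω) (fun p => f ω p.1 p.2.1 p.2.2) i) μ)
    -- … and each value is uniform on `H = {0,1}^b`: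
    (hUnif : ∀ i : C ⊕ (ℕ × (Fin b → Bool) × List (Fin b → Bool)),
      μ.map (fun ω => Sum.elim (hashC ω) (fun p => f ω p.1 p.2.1 p.2.2) i) =
        (PMF.uniformOfFintype (Fin b → Bool)).toMeasure)
    (a t : RTree C ar) (hne : a ≠ t)
    (ha : a.size < 2 ^ b) (ht : t.size < 2 ^ b) :
    μ {ω | a.hashOf (hashC ω) (f ω) = t.hashOf (hashC ω) (f ω)} ≤
      ((a.size : ℝ≥0∞) + (t.size : ℝ≥0∞)) / 2 ^ b := by
  have hb := main_ind
    (X := fun (i : RRHCB.Idx C b) (ω : Ω) => Sum.elim (hashC ω) (fun p => f ω p.1 p.2.1 p.2.2) i)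
    hIndep hUnif (a.size + t.size) a t le_rfl hne
  rw [div_eq_mul_inv]
  exact hb
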